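/- For odd positive integers b_n (n ≥ 1), the stopping time T̃^p = inf{n ≥ 1 : |V_n^p| ≥ b_n} is stochastically increasing in p ∈ [0,1/2] and stochastically decreasing in p ∈ [1/2,1]; that is, for |p' - 1/2| > |p'' - 1/2| and every m ≥ 1, P(T̃^{p'} > m) ≤ P(T̃^{p''} > m). -/

import Mathlib

open MeasureTheory ProbabilityTheory Finset

/-- The distribution of a single increment of the Bernoulli random walk:
`+1` with probability `p` and `-1` with probability `1 - p`. -/
noncomputable def stepDist (p : ℝ) : Measure ℝ :=
  ENNReal.ofReal p • Measure.dirac 1 + ENNReal.ofReal (1 - p) • Measure.dirac (-1)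


/-! ### Combinatorial core -/

/-- The window predicate: position `4k - 2j + 1` (i.e. `1 + 2(2k - j)`) is strictly
inside `(-(b j), b j)`. -/
def chiW (b : ℕ → ℕ) (j : ℕ) (k : ℤ) : Prop :=
  -(b j : ℤ) < 4 * k - 2 * j + 1 ∧ 4 * k - 2 * j + 1 < (b j : ℤ)

instance (b : ℕ → ℕ) (j : ℕ) (k : ℤ) : Decidable (chiW b j k) := by
  unfold chiW; infer_instance

/-- For odd `b j`, the window is an integer interval `[a, c]` with `a + c ∈ {j-1, j}`. -/
lemma window_struct (b : ℕ → ℕ) (j : ℕ) (hodd : Odd (b j)) :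
    ∃ a c : ℤ, (∀ k : ℤ, chiW b j k ↔ (a ≤ k ∧ k ≤ c)) ∧
      (a + c = (j : ℤ) - 1 ∨ a + c = (j : ℤ)) := by
  obtain ⟨γ, hγ⟩ := hodd
  rcases Int.even_or_odd ((j : ℤ) - γ) with ⟨t, ht⟩ | ⟨t, ht⟩
  · refine ⟨t, (j : ℤ) - 1 - t, fun k => ?_, Or.inl (by ring)⟩
    unfold chiW; omega
  · refine ⟨t + 1, (j : ℤ) - 1 - t, fun k => ?_, Or.inr (by ring)⟩
    unfold chiW; omega

/-- Pascal step preserves the P3 invariant. -/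
lemma pascalP3 (n : ℤ) (hn : 0 ≤ n) (f : ℤ → ℤ)
    (hvan : ∀ k : ℤ, k < 0 ∨ n < k → f k = 0)
    (hpos : ∀ k : ℤ, 0 ≤ f k)
    (hP3 : ∀ k : ℤ, 2 * k ≤ n - 1 → f (n - k) - f (n - 1 - k) ≤ f (k + 1) - f k)
    (g : ℤ → ℤ) (hg : ∀ k : ℤ, g k = k * f (k - 1) + (n + 1 - k) * f k) :
    ∀ k : ℤ, 2 * k ≤ n → g (n + 1 - k) - g (n + 1 - 1 - k) ≤ g (k + 1) - g k := by
  intro k hk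
  have hsimp : n + 1 - 1 - k = n - k := by ring
  rw [hsimp]
  rcases eq_or_lt_of_le hk with hk2 | hk2
  · have h1 : n - k = k := by omega
    have h2 : n + 1 - k = k + 1 := by omega
    rw [h1, h2]
  rcases lt_or_ge k 0 with hneg | hge
  · -- k < 0
    have hRk : g k = 0 := by
      rw [hg, hvan _ (Or.inl (by omega)), hvan _ (Or.inl (by omega))]; ring
    have hRk1 : 0 ≤ g (k + 1) := by
      rcases eq_or_lt_of_le (show k ≤ -1 by omega) with h1 | h1
      · subst h1
        rw [hg]
        norm_num
        nlinarith [hpos 0]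
      · rw [hg, hvan _ (Or.inl (by omega)), hvan _ (Or.inl (by omega))]
        simp
    have hL1 : 0 ≤ g (n - k) := by
      rw [hg]
      rcases eq_or_lt_of_le (show n + 1 ≤ n - k by omega) with h1 | h1
      · rw [← h1]
        have e : (n : ℤ) + 1 - 1 = n := by ring
        rw [e, hvan (n + 1) (Or.inr (by omega))]
        nlinarith [hpos n]
      · rw [hvan _ (Or.inr (by omega)), hvan _ (Or.inr (by omega))]
        simp
    have hL2 : g (n + 1 - k) = 0 := by
      rw [hg, hvan _ (Or.inr (by omega)), hvan _ (Or.inr (by omega))]; ring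
    linarith
  · -- main case 0 ≤ k, 2k ≤ n - 1
    have hb2 := hP3 k (by omega)
    have hb1 := hP3 (k - 1) (by omega)
    rw [show k - 1 + 1 = k by ring] at hb1
    rw [show n - (k - 1) = n + 1 - k by ring] at hb1
    rw [show n - 1 - (k - 1) = n - k by ring] at hb1
    have t1 : 0 ≤ k * ((f k - f (k - 1)) - (f (n + 1 - k) - f (n - k))) :=
      mul_nonneg hge (by linarith)
    have t2 : 0 ≤ (n - k) * ((f (k + 1) - f k) - (f (n - k) - f (n - 1 - k))) :=
      mul_nonneg (by omega) (by linarith)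
    rw [hg (n + 1 - k), hg (n - k), hg (k + 1), hg k]
    rw [show (k : ℤ) + 1 - 1 = k by ring, show n + 1 - k - 1 = n - k by ring,
      show n - k - 1 = n - 1 - k by ring]
    nlinarith [t1, t2]

/-- Truncation to a (near-)symmetric interval preserves the P3 invariant. -/
lemma truncP3 (j : ℤ) (f : ℤ → ℤ) (a c : ℤ)
    (hac : a + c = j - 1 ∨ a + c = j)
    (hpos : ∀ k : ℤ, 0 ≤ f k)
    (hP3 : ∀ k : ℤ, 2 * k ≤ j - 1 → f (j - k) - f (j - 1 - k) ≤ f (k + 1) - f k)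
    (g : ℤ → ℤ) (hg : ∀ k : ℤ, g k = if a ≤ k ∧ k ≤ c then f k else 0) :
    ∀ k : ℤ, 2 * k ≤ j - 1 → g (j - k) - g (j - 1 - k) ≤ g (k + 1) - g k := by
  intro k hk
  rcases eq_or_lt_of_le hk with heq | hlt
  · have h1 : j - k = k + 1 := by omega
    have h2 : j - 1 - k = k := by omega
    rw [h1, h2]
  rcases le_or_gt a c with hwin | hwin
  swap
  · have hz : ∀ x : ℤ, g x = 0 := by
      intro x; rw [hg]; rw [if_neg]; omega
    simp [hz]
  rcases lt_or_ge k (a - 1) with h1 | h1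
  · -- k ≤ a - 2
    have e1 : g k = 0 := by rw [hg, if_neg]; omega
    have e2 : g (k + 1) = 0 := by rw [hg, if_neg]; omega
    have e3 : g (j - k) = 0 := by rw [hg, if_neg]; omega
    have e4 : g (j - 1 - k) = 0 := by rw [hg, if_neg]; omega
    simp [e1, e2, e3, e4]
  rcases eq_or_lt_of_le h1 with h2 | h2
  · -- k = a - 1
    have e1 : g k = 0 := by rw [hg, if_neg]; omega
    have e2 : g (k + 1) = f (k + 1) := by rw [hg, if_pos]; omega
    have e3 : g (j - k) = 0 := by rw [hg, if_neg]; omega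
    have hrest : g (j - 1 - k) = 0 ∨ g (j - 1 - k) = f (j - 1 - k) := by
      rw [hg]; split
      · right; rfl
      · left; rfl
    rcases hrest with h | h <;>
      · rw [e1, e2, e3, h]
        have := hpos (k + 1)
        have := hpos (j - 1 - k)
        omega
  · -- a ≤ k
    have hklec : k + 1 ≤ c := by omega
    have e1 : g k = f k := by rw [hg, if_pos]; omega
    have e2 : g (k + 1) = f (k + 1) := by rw [hg, if_pos]; omega
    have e4 : g (j - 1 - k) = f (j - 1 - k) := by rw [hg, if_pos]; omega
    have hmain := hP3 k (by omega)
    rcases le_or_gt (j - k) c with h3 | h3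
    · have e3 : g (j - k) = f (j - k) := by rw [hg, if_pos]; omega
      rw [e1, e2, e3, e4]; linarith
    · have e3 : g (j - k) = 0 := by rw [hg, if_neg]; omega
      rw [e1, e2, e3, e4]
      have := hpos (j - k)
      linarith


section CNT
variable (b : ℕ → ℕ)

/-- Survival of the set `T` of up-step times (within `[1, n]`), starting from `+1`. -/
def SurvI (n : ℕ) (T : Finset ℕ) : Prop :=
  ∀ j, 1 ≤ j → j ≤ n → |1 + 2 * (2 * ((T ∩ Icc 1 j).card : ℤ) - j)| < (b j : ℤ)

open Classical in
/-- Number of surviving up-step sets of size `k` among times `[1, n]`, starting at `+1`. -/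
noncomputable def uCnt (n : ℕ) (k : ℤ) : ℕ :=
  ((Icc 1 n).powerset.filter (fun T => SurvI b n T ∧ (T.card : ℤ) = k)).card

lemma uCnt_neg (n : ℕ) (k : ℤ) (h : k < 0 ∨ (n : ℤ) < k) : uCnt b n k = 0 := by
  classical
  rw [uCnt, Finset.card_eq_zero]
  apply Finset.filter_eq_empty_iff.mpr
  intro T hT
  rw [Finset.mem_powerset] at hT
  have hc : T.card ≤ n := by
    have := Finset.card_le_card hT
    simpa [Nat.card_Icc] using this
  rintro ⟨-, hk⟩
  omega

lemma uCnt_zero (k : ℤ) : uCnt b 0 k = if k = 0 then 1 else 0 := by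
  classical
  rw [uCnt]
  have h0 : Icc 1 0 = (∅ : Finset ℕ) := by simp
  rw [h0]
  by_cases hk : k = 0
  · subst hk
    rw [if_pos rfl, Finset.card_eq_one]
    refine ⟨∅, ?_⟩
    ext T
    simp only [Finset.mem_filter, Finset.mem_powerset, Finset.powerset_empty,
      Finset.mem_singleton, Finset.subset_empty]
    constructor
    · rintro ⟨h, -⟩; exact h
    · rintro rfl
      refine ⟨rfl, ?_, by simp⟩
      intro j hj1 hj2; omega
  · rw [if_neg hk, Finset.card_eq_zero]
    apply Finset.filter_eq_empty_iff.mpr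
    intro T hT
    simp only [Finset.powerset_empty, Finset.mem_singleton] at hT
    subst hT
    rintro ⟨-, h⟩
    simp at h
    exact hk h.symm

lemma survI_succ (n : ℕ) (T : Finset ℕ) (hT : T ⊆ Icc 1 n) :
    SurvI b (n + 1) T ↔ SurvI b n T ∧
      |1 + 2 * (2 * (T.card : ℤ) - (n + 1))| < (b (n + 1) : ℤ) := by
  have hTn : T ∩ Icc 1 (n + 1) = T := by
    apply Finset.inter_eq_left.mpr
    exact hT.trans (Finset.Icc_subset_Icc_right (by omega))
  constructor
  · intro h
    refine ⟨fun j h1 h2 => h j h1 (by omega), ?_⟩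
    have := h (n + 1) (by omega) le_rfl
    rwa [hTn] at this
  · rintro ⟨h1, h2⟩
    intro j hj1 hj2
    rcases Nat.lt_or_ge j (n + 1) with hj | hj
    · exact h1 j hj1 (by omega)
    · have : j = n + 1 := by omega
      subst this
      rwa [hTn]

lemma survI_succ_insert (n : ℕ) (T : Finset ℕ) (hT : T ⊆ Icc 1 n) :
    SurvI b (n + 1) (insert (n + 1) T) ↔ SurvI b n T ∧
      |1 + 2 * (2 * ((T.card : ℤ) + 1) - (n + 1))| < (b (n + 1) : ℤ) := by
  have hnot : (n + 1) ∉ T := fun h => by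
    have := hT h; simp [Finset.mem_Icc] at this
  have hsmall : ∀ j, 1 ≤ j → j ≤ n → (insert (n + 1) T) ∩ Icc 1 j = T ∩ Icc 1 j := by
    intro j hj1 hj2
    apply Finset.insert_inter_of_notMem
    simp [Finset.mem_Icc]; omega
  have hbig : (insert (n + 1) T) ∩ Icc 1 (n + 1) = insert (n + 1) T := by
    apply Finset.inter_eq_left.mpr
    intro x hx
    rcases Finset.mem_insert.mp hx with rfl | hx
    · simp [Finset.mem_Icc]
    · have := hT hx; simp [Finset.mem_Icc] at this ⊢; omega
  have hcard : ((insert (n + 1) T).card : ℤ) = (T.card : ℤ) + 1 := by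
    rw [Finset.card_insert_of_notMem hnot]; push_cast; ring
  constructor
  · intro h
    constructor
    · intro j hj1 hj2
      have := h j hj1 (by omega)
      rwa [hsmall j hj1 hj2] at this
    · have := h (n + 1) (by omega) le_rfl
      rwa [hbig, hcard] at this
  · rintro ⟨h1, h2⟩
    intro j hj1 hj2
    rcases Nat.lt_or_ge j (n + 1) with hj | hj
    · rw [hsmall j hj1 (by omega)]
      exact h1 j hj1 (by omega)
    · have : j = n + 1 := by omega
      subst this
      rw [hbig, hcard]
      exact h2

lemma chiW_iff (j : ℕ) (k : ℤ) :
    chiW b j k ↔ |1 + 2 * (2 * k - (j : ℤ))| < (b j : ℤ) := by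
  rw [abs_lt]; unfold chiW; constructor <;> (rintro ⟨h1, h2⟩; constructor <;> omega)

lemma uCnt_succ (n : ℕ) (k : ℤ) :
    uCnt b (n + 1) k = if chiW b (n + 1) k then uCnt b n (k - 1) + uCnt b n k else 0 := by
  classical
  have hicc : Icc 1 (n + 1) = insert (n + 1) (Icc 1 n) := by
    ext x; simp [Finset.mem_Icc]; omega
  have hnmem : (n + 1) ∉ Icc 1 n := by simp [Finset.mem_Icc]
  rw [uCnt, hicc, Finset.powerset_insert, Finset.filter_union]
  rw [Finset.card_union_of_disjoint]
  · -- compute both cards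
    have hpiece1 : ((Icc 1 n).powerset.filter
        (fun T => SurvI b (n + 1) T ∧ (T.card : ℤ) = k)).card
        = if chiW b (n + 1) k then uCnt b n k else 0 := by
      by_cases hchi : chiW b (n + 1) k
      · rw [if_pos hchi, uCnt]
        congr 1
        apply Finset.filter_congr
        intro T hT
        rw [Finset.mem_powerset] at hT
        rw [survI_succ b n T hT]
        constructor
        · rintro ⟨⟨h1, -⟩, h2⟩; exact ⟨h1, h2⟩
        · rintro ⟨h1, h2⟩
          refine ⟨⟨h1, ?_⟩, h2⟩
          rw [chiW_iff] at hchi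
          rw [h2]
          push_cast at hchi ⊢
          ring_nf at hchi ⊢
          exact hchi
      · rw [if_neg hchi, Finset.card_eq_zero]
        apply Finset.filter_eq_empty_iff.mpr
        intro T hT
        rw [Finset.mem_powerset] at hT
        rw [survI_succ b n T hT]
        rintro ⟨⟨-, h2⟩, h3⟩
        apply hchi
        rw [chiW_iff]
        rw [h3] at h2
        push_cast at h2 ⊢
        ring_nf at h2 ⊢
        exact h2
    have hpiece2 : (((Icc 1 n).powerset.image (insert (n + 1))).filter
        (fun T => SurvI b (n + 1) T ∧ (T.card : ℤ) = k)).card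
        = if chiW b (n + 1) k then uCnt b n (k - 1) else 0 := by
      rw [Finset.filter_image]
      rw [Finset.card_image_of_injOn]
      swap
      · intro T hT S hS hTS
        simp only [Finset.coe_filter, Set.mem_setOf_eq] at hT hS
        have hT' : T ⊆ Icc 1 n := Finset.mem_powerset.mp hT.1
        have hS' : S ⊆ Icc 1 n := Finset.mem_powerset.mp hS.1
        have h1 : (n+1) ∉ T := fun h => hnmem (hT' h)
        have h2 : (n+1) ∉ S := fun h => hnmem (hS' h)
        rw [← Finset.erase_insert h1, ← Finset.erase_insert h2, hTS]
      by_cases hchi : chiW b (n + 1) k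
      · rw [if_pos hchi, uCnt]
        congr 1
        apply Finset.filter_congr
        intro T hT
        rw [Finset.mem_powerset] at hT
        have h1 : (n+1) ∉ T := fun h => hnmem (hT h)
        rw [survI_succ_insert b n T hT]
        rw [Finset.card_insert_of_notMem h1]
        constructor
        · rintro ⟨⟨hs, -⟩, h2⟩
          refine ⟨hs, by push_cast at h2 ⊢; omega⟩
        · rintro ⟨hs, h2⟩
          have hk : (T.card : ℤ) = k - 1 := h2
          refine ⟨⟨hs, ?_⟩, by push_cast; omega⟩
          rw [chiW_iff] at hchi
          rw [hk]
          push_cast at hchi ⊢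
          ring_nf at hchi ⊢
          exact hchi
      · rw [if_neg hchi, Finset.card_eq_zero]
        apply Finset.filter_eq_empty_iff.mpr
        intro T hT
        rw [Finset.mem_powerset] at hT
        have h1 : (n+1) ∉ T := fun h => hnmem (hT h)
        rw [survI_succ_insert b n T hT, Finset.card_insert_of_notMem h1]
        rintro ⟨⟨-, h2⟩, h3⟩
        apply hchi
        rw [chiW_iff]
        have hk : (T.card : ℤ) = k - 1 := by push_cast at h3; omega
        rw [hk] at h2
        push_cast at h2 ⊢
        ring_nf at h2 ⊢
        exact h2
    rw [hpiece1, hpiece2]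
    by_cases hchi : chiW b (n + 1) k
    · rw [if_pos hchi, if_pos hchi, if_pos hchi]; omega
    · rw [if_neg hchi, if_neg hchi, if_neg hchi]
  · -- disjointness
    apply Finset.disjoint_filter_filter
    rw [Finset.disjoint_left]
    intro T hT hT2
    rw [Finset.mem_powerset] at hT
    rw [Finset.mem_image] at hT2
    obtain ⟨S, -, rfl⟩ := hT2
    exact hnmem (hT (Finset.mem_insert_self _ _))


lemma SurvI_def (n : ℕ) (T : Finset ℕ) : SurvI b n T ↔
    ∀ j, 1 ≤ j → j ≤ n → |1 + 2 * (2 * ((T ∩ Icc 1 j).card : ℤ) - j)| < (b j : ℤ) :=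
  Iff.rfl

open Classical in
lemma uCnt_def (n : ℕ) (k : ℤ) : uCnt b n k =
    ((Icc 1 n).powerset.filter (fun T => SurvI b n T ∧ (T.card : ℤ) = k)).card := rfl

/-- Integer factorial of `max z 0`. -/
def ifac (z : ℤ) : ℤ := (Nat.factorial z.toNat : ℤ)

lemma ifac_nonneg (z : ℤ) : 0 ≤ ifac z := Int.natCast_nonneg _

lemma ifac_succ (z : ℤ) (hz : 0 ≤ z) : ifac (z + 1) = (z + 1) * ifac z := by
  unfold ifac
  have h1 : (z + 1).toNat = z.toNat + 1 := by omega
  rw [h1, Nat.factorial_succ]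
  push_cast
  have : ((z.toNat : ℤ)) = z := by omega
  rw [this]

/-- The factorial-normalized survival counts. -/
noncomputable def Xw (n : ℕ) (k : ℤ) : ℤ :=
  (uCnt b n k : ℤ) * ifac k * ifac ((n : ℤ) - k)

lemma Xw_nonneg (n : ℕ) (k : ℤ) : 0 ≤ Xw b n k := by
  unfold Xw
  have := ifac_nonneg k
  have := ifac_nonneg ((n : ℤ) - k)
  positivity

lemma Xw_van (n : ℕ) (k : ℤ) (h : k < 0 ∨ (n : ℤ) < k) : Xw b n k = 0 := by
  unfold Xw
  rw [uCnt_neg b n k h]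
  simp

lemma Xw_zero (k : ℤ) : Xw b 0 k = if k = 0 then 1 else 0 := by
  unfold Xw
  rw [uCnt_zero]
  by_cases h : k = 0
  · subst h; simp [ifac]
  · simp [h]

lemma Xw_succ (n : ℕ) (k : ℤ) :
    Xw b (n + 1) k = if chiW b (n + 1) k
      then k * Xw b n (k - 1) + ((n : ℤ) + 1 - k) * Xw b n k else 0 := by
  unfold Xw
  rw [uCnt_succ]
  by_cases hchi : chiW b (n + 1) k
  · rw [if_pos hchi, if_pos hchi]
    rcases lt_or_ge k 0 with hk | hk
    · rw [uCnt_neg b n (k - 1) (Or.inl (by omega)), uCnt_neg b n k (Or.inl hk)]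
      simp
    rcases le_or_gt k (n : ℤ) with hkn | hkn
    · -- 0 ≤ k ≤ n
      have e1 : ((n + 1 : ℕ) : ℤ) - k = ((n : ℤ) - k) + 1 := by push_cast; ring
      have e2 : ifac (((n + 1 : ℕ) : ℤ) - k) = ((n : ℤ) + 1 - k) * ifac ((n : ℤ) - k) := by
        rw [e1, ifac_succ _ (by omega)]
        ring_nf
      rcases eq_or_lt_of_le hk with hk0 | hk0
      · -- k = 0
        rw [← hk0]
        rw [uCnt_neg b n (0 - 1) (Or.inl (by omega))]
        rw [← hk0] at e2
        rw [e2]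
        push_cast
        ring
      · -- 1 ≤ k
        have e3 : ifac k = k * ifac (k - 1) := by
          have : k = (k - 1) + 1 := by ring
          rw [this, ifac_succ _ (by omega)]
          ring_nf
        have e4 : (n : ℤ) - (k - 1) = ((n : ℤ) - k) + 1 := by ring
        have e5 : ifac ((n : ℤ) - (k - 1)) = ((n : ℤ) + 1 - k) * ifac ((n : ℤ) - k) := by
          rw [e4, ifac_succ _ (by omega)]; ring_nf
        rw [e2, e3, e5]
        push_cast
        ring
    rcases eq_or_lt_of_le (show (n : ℤ) + 1 ≤ k by omega) with hk1 | hk1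
    · -- k = n + 1
      rw [uCnt_neg b n k (Or.inr (by omega))]
      have e3 : ifac k = k * ifac (k - 1) := by
        have : k = (k - 1) + 1 := by ring
        rw [this, ifac_succ _ (by omega)]
        ring_nf
      have e6 : ((n + 1 : ℕ) : ℤ) - k = 0 := by push_cast; omega
      have e7 : (n : ℤ) - (k - 1) = 0 := by omega
      rw [e6, e7, e3]
      push_cast
      ring
    · -- k > n + 1
      rw [uCnt_neg b n k (Or.inr (by omega)), uCnt_neg b n (k - 1) (Or.inr (by omega))]
      simp
  · rw [if_neg hchi, if_neg hchi]
    simp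

/-- The key P3 invariant, holding at every level when all boundaries are odd. -/
lemma XwP3 (hodd : ∀ n, 1 ≤ n → Odd (b n)) :
    ∀ n : ℕ, ∀ k : ℤ, 2 * k ≤ (n : ℤ) - 1 →
      Xw b n ((n : ℤ) - k) - Xw b n ((n : ℤ) - 1 - k) ≤ Xw b n (k + 1) - Xw b n k := by
  intro n
  induction n with
  | zero =>
    intro k hk
    simp only [Nat.cast_zero]
    rcases eq_or_lt_of_le (show k ≤ -1 by omega) with h1 | h1
    · subst h1
      norm_num
      rw [Xw_zero, Xw_zero, Xw_zero]
      norm_num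
    · rw [Xw_van b 0 (k+1) (Or.inl (by omega)), Xw_van b 0 k (Or.inl (by omega)),
        Xw_van b 0 (0 - k) (Or.inr (by omega)), Xw_van b 0 (0 - 1 - k) (Or.inr (by omega))]
  | succ n ih =>
    obtain ⟨a, c, hwin, hac⟩ := window_struct b (n + 1) (hodd (n + 1) (by omega))
    set g : ℤ → ℤ := fun k => k * Xw b n (k - 1) + ((n : ℤ) + 1 - k) * Xw b n k with hgdef
    have hgP3 : ∀ k : ℤ, 2 * k ≤ (n : ℤ) →
        g ((n : ℤ) + 1 - k) - g ((n : ℤ) + 1 - 1 - k) ≤ g (k + 1) - g k := by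
      apply pascalP3 (n : ℤ) (Int.natCast_nonneg _) (Xw b n) (fun k h => Xw_van b n k h)
        (fun k => Xw_nonneg b n k) ih
      intro k; rfl
    have hXg : ∀ k : ℤ, Xw b (n + 1) k = if a ≤ k ∧ k ≤ c then g k else 0 := by
      intro k
      rw [Xw_succ]
      by_cases h : chiW b (n + 1) k
      · rw [if_pos h, if_pos ((hwin k).mp h)]
      · rw [if_neg h, if_neg (fun hc => h ((hwin k).mpr hc))]
    have := truncP3 ((n : ℤ) + 1) g a c (by push_cast at hac ⊢; omega)
      (fun k => ?gpos) (fun k hk => ?gP3) (Xw b (n + 1)) hXg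
    case gpos =>
      -- 0 ≤ g k
      rcases lt_or_ge k 0 with h | h
      · rw [hgdef]
        simp only
        rw [Xw_van b n (k - 1) (Or.inl (by omega)), Xw_van b n k (Or.inl (by omega))]
        simp
      rcases le_or_gt k ((n : ℤ) + 1) with h2 | h2
      · rw [hgdef]
        simp only
        exact add_nonneg (mul_nonneg h (Xw_nonneg b n (k - 1)))
          (mul_nonneg (by omega) (Xw_nonneg b n k))
      · rw [hgdef]
        simp only
        rw [Xw_van b n (k - 1) (Or.inr (by omega)), Xw_van b n k (Or.inr (by omega))]
        simp
    case gP3 =>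
      have := hgP3 k (by omega)
      convert this using 3 <;> push_cast <;> ring
    · intro k hk
      have := this k (by push_cast; push_cast at hk; omega)
      convert this using 3 <;> push_cast <;> ring


end CNT

/-! ### Analytic part -/

section HPART
variable (m : ℕ)

/-- Central binomial sum. -/
noncomputable def Hc (a : ℕ) (p : ℝ) : ℝ :=
  ∑ k ∈ Icc a (m - a), (m.choose k : ℝ) * (p ^ k * (1 - p) ^ (m - k))

lemma Hc_symm (a : ℕ) (p : ℝ) : Hc m a (1 - p) = Hc m a p := by
  unfold Hc
  rw [Finset.sum_nbij' (i := fun k => m - k) (j := fun k => m - k)]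
  · intro k hk
    simp only [Finset.mem_Icc] at hk ⊢
    omega
  · intro k hk
    simp only [Finset.mem_Icc] at hk ⊢
    omega
  · intro k hk
    simp only [Finset.mem_Icc] at hk
    omega
  · intro k hk
    simp only [Finset.mem_Icc] at hk
    omega
  · intro k hk
    simp only [Finset.mem_Icc] at hk
    have h1 : m - (m - k) = k := by omega
    have h2 : m.choose (m - k) = m.choose k := Nat.choose_symm (by omega)
    rw [h1, h2]
    have h3 : (1 : ℝ) - (1 - p) = p := by ring
    rw [h3]
    ring

/-- Telescoping sum over `Icc`. -/
lemma tel_sum (f : ℕ → ℝ) (a L : ℕ) :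
    ∑ k ∈ Icc a (a + L), (f k - f (k + 1)) = f a - f (a + L + 1) := by
  induction L with
  | zero => simp
  | succ L ih =>
    have h : Icc a (a + (L + 1)) = insert (a + L + 1) (Icc a (a + L)) := by
      ext x; simp only [Finset.mem_Icc, Finset.mem_insert]; omega
    rw [h, Finset.sum_insert (by simp only [Finset.mem_Icc]; omega), ih]
    have e : a + (L + 1) + 1 = a + L + 1 + 1 := by omega
    rw [e]
    ring

lemma choose_id1 (k : ℕ) (hk : 1 ≤ k) : k * m.choose k = m * (m - 1).choose (k - 1) := by
  rcases Nat.eq_zero_or_pos m with rfl | hm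
  · rcases Nat.eq_or_lt_of_le hk with rfl | h
    · simp
    · rw [Nat.choose_eq_zero_of_lt (by omega), Nat.choose_eq_zero_of_lt (by omega)]
      simp
  · have this : (m - 1).succ * (m - 1).choose (k - 1) = (m - 1).succ.choose (k - 1).succ * (k - 1).succ :=
      Nat.add_one_mul_choose_eq (m - 1) (k - 1)
    have e1 : (m - 1).succ = m := by omega
    have e2 : (k - 1).succ = k := by omega
    rw [e1, e2] at this
    rw [mul_comm]
    omega

lemma choose_id2 (k : ℕ) : (m - k) * m.choose k = m * (m - 1).choose k := by
  rcases Nat.eq_zero_or_pos m with rfl | hm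
  · simp
  · have h1 : (m - 1).succ * (m - 1).choose k = (m - 1).succ.choose k.succ * k.succ :=
      Nat.add_one_mul_choose_eq (m - 1) k
    have e1 : (m - 1).succ = m := by omega
    rw [e1] at h1
    have h2 := Nat.choose_succ_right_eq m k
    simp only [Nat.succ_eq_add_one] at h1
    rw [mul_comm]
    omega

/-- Derivative of each binomial term. -/
lemma hasDeriv_term (k : ℕ) (p : ℝ) :
    HasDerivAt (fun x : ℝ => (m.choose k : ℝ) * (x ^ k * (1 - x) ^ (m - k)))
      ((m.choose k : ℝ) * (((k : ℝ) * p ^ (k - 1)) * (1 - p) ^ (m - k)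
        + p ^ k * (((m - k : ℕ) : ℝ) * (1 - p) ^ (m - k - 1) * (-1)))) p := by
  have h1 : HasDerivAt (fun x : ℝ => x ^ k) ((k : ℝ) * p ^ (k - 1)) p := hasDerivAt_pow k p
  have h2 : HasDerivAt (fun x : ℝ => (1 - x) ^ (m - k))
      (((m - k : ℕ) : ℝ) * (1 - p) ^ (m - k - 1) * (-1)) p := by
    have hin : HasDerivAt (fun x : ℝ => 1 - x) (-1) p := by
      simpa using (hasDerivAt_id p).const_sub 1
    exact (hasDerivAt_pow (m - k) (1 - p)).comp p hin
  exact (h1.mul h2).const_mul _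

/-- Monotonicity of the central binomial sum on `[0, 1/2]`. -/
lemma Hc_monoOn (a : ℕ) (ha : 1 ≤ a) (ham : 2 * a ≤ m + 1) :
    MonotoneOn (Hc m a) (Set.Icc (0 : ℝ) (1 / 2)) := by
  rcases le_or_gt a (m - a) with hle | hlt
  swap
  · -- empty interval
    have h : Icc a (m - a) = ∅ := Finset.Icc_eq_empty (by omega)
    intro x _ y _ _
    unfold Hc
    rw [h]
    simp
  have hm1 : 1 ≤ m := by omega
  apply monotoneOn_of_deriv_nonneg (convex_Icc _ _)
  · -- continuity
    apply Continuous.continuousOn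
    apply continuous_finset_sum
    intro k _
    fun_prop
  · -- differentiability
    intro x _
    apply DifferentiableAt.differentiableWithinAt
    exact (HasDerivAt.fun_sum (fun k (_ : k ∈ Icc a (m - a)) =>
      hasDeriv_term m k x)).differentiableAt
  · intro x hx
    rw [interior_Icc] at hx
    obtain ⟨hx0, hx1⟩ := hx
    -- compute deriv
    have hsum : HasDerivAt (Hc m a)
        (∑ k ∈ Icc a (m - a), ((m.choose k : ℝ) * (((k : ℝ) * x ^ (k - 1)) * (1 - x) ^ (m - k)
        + x ^ k * (((m - k : ℕ) : ℝ) * (1 - x) ^ (m - k - 1) * (-1))))) x := by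
      apply HasDerivAt.fun_sum
      intro k _
      exact hasDeriv_term m k x
    rw [hsum.deriv]
    -- telescоping
    set A : ℕ → ℝ := fun k => (m : ℝ) * ((m - 1).choose (k - 1) : ℝ) * x ^ (k - 1) * (1 - x) ^ (m - k)
      with hA
    have hterm : ∀ k ∈ Icc a (m - a),
        (m.choose k : ℝ) * (((k : ℝ) * x ^ (k - 1)) * (1 - x) ^ (m - k)
        + x ^ k * (((m - k : ℕ) : ℝ) * (1 - x) ^ (m - k - 1) * (-1))) = A k - A (k + 1) := by
      intro k hk
      simp only [Finset.mem_Icc] at hk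
      have hk1 : 1 ≤ k := le_trans ha hk.1
      have c1 : ((k : ℝ)) * (m.choose k : ℝ) = (m : ℝ) * ((m - 1).choose (k - 1) : ℝ) := by
        exact_mod_cast congrArg (Nat.cast : ℕ → ℝ) (choose_id1 m k hk1)
      have c2 : (((m - k : ℕ) : ℝ)) * (m.choose k : ℝ) = (m : ℝ) * ((m - 1).choose k : ℝ) := by
        exact_mod_cast congrArg (Nat.cast : ℕ → ℝ) (choose_id2 m k)
      rw [hA]
      simp only
      have e1 : k + 1 - 1 = k := by omega
      have e2 : m - (k + 1) = m - k - 1 := by omega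
      rw [e1, e2]
      linear_combination (x ^ (k - 1) * (1 - x) ^ (m - k)) * c1
        - (x ^ k * (1 - x) ^ (m - k - 1)) * c2
    rw [Finset.sum_congr rfl hterm]
    have hIcc : Icc a (m - a) = Icc a (a + (m - 2 * a)) := by
      congr 1; omega
    rw [hIcc, tel_sum A a (m - 2 * a)]
    have e3 : a + (m - 2 * a) + 1 = m - a + 1 := by omega
    rw [e3, hA]
    simp only
    -- A a - A (m - a + 1) ≥ 0
    have e4 : m - (m - a + 1) = a - 1 := by omega
    have e5 : m - a + 1 - 1 = m - a := by omega
    rw [e4, e5]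
    have e6 : (m - 1).choose (m - a) = (m - 1).choose (a - 1) := by
      rw [← Nat.choose_symm (show a - 1 ≤ m - 1 by omega)]
      congr 1
      omega
    rw [e6]
    have key : x ^ (m - a) * (1 - x) ^ (a - 1) ≤ x ^ (a - 1) * (1 - x) ^ (m - a) := by
      have hq : x ≤ 1 - x := by linarith
      have he : m - a = (a - 1) + (m + 1 - 2 * a) := by omega
      rw [he, pow_add, pow_add]
      have h1 : x ^ (m + 1 - 2 * a) ≤ (1 - x) ^ (m + 1 - 2 * a) :=
        pow_le_pow_left₀ (le_of_lt hx0) hq _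
      have h2 : (0:ℝ) ≤ x ^ (a - 1) * (1 - x) ^ (a - 1) :=
        mul_nonneg (pow_nonneg hx0.le _) (pow_nonneg (by linarith) _)
      calc x ^ (a - 1) * x ^ (m + 1 - 2 * a) * (1 - x) ^ (a - 1)
          = (x ^ (a - 1) * (1 - x) ^ (a - 1)) * x ^ (m + 1 - 2 * a) := by ring
        _ ≤ (x ^ (a - 1) * (1 - x) ^ (a - 1)) * (1 - x) ^ (m + 1 - 2 * a) := by
            exact mul_le_mul_of_nonneg_left h1 h2
        _ = x ^ (a - 1) * ((1 - x) ^ (a - 1) * (1 - x) ^ (m + 1 - 2 * a)) := by ring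
    have hcn : (0:ℝ) ≤ (m : ℝ) * ((m - 1).choose (a - 1) : ℝ) := by positivity
    nlinarith [key, hcn]


lemma Hc_def (a : ℕ) (p : ℝ) :
    Hc m a p = ∑ k ∈ Icc a (m - a), (m.choose k : ℝ) * (p ^ k * (1 - p) ^ (m - k)) := rfl

end HPART

/-- The comparison `H a p₁ ≤ H a p₂` whenever `p₁` is farther from `1/2`. -/
lemma Hc_cmp (m a : ℕ) (ha : 1 ≤ a) (ham : 2 * a ≤ m + 1) (p₁ p₂ : ℝ)
    (h₁ : p₁ ∈ Set.Icc (0:ℝ) 1) (h₂ : p₂ ∈ Set.Icc (0:ℝ) 1)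
    (hd : |p₂ - 1/2| ≤ |p₁ - 1/2|) : Hc m a p₁ ≤ Hc m a p₂ := by
  have hmin : ∀ p : ℝ, min p (1 - p) = 1/2 - |p - 1/2| := by
    intro p
    rcases le_total p (1/2) with h | h
    · rw [abs_of_nonpos (by linarith), min_eq_left (by linarith)]; ring
    · rw [abs_of_nonneg (by linarith), min_eq_right (by linarith)]; ring
  have hH : ∀ p : ℝ, Hc m a p = Hc m a (min p (1 - p)) := by
    intro p
    rcases le_total p (1 - p) with h | h
    · rw [min_eq_left h]
    · rw [min_eq_right h, Hc_symm]
  rw [hH p₁, hH p₂]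
  apply Hc_monoOn m a ha ham
  · constructor
    · rw [hmin]
      have : |p₁ - 1/2| ≤ 1/2 := by
        rw [abs_le]; constructor <;> [linarith [h₁.1]; linarith [h₁.2]]
      linarith
    · rw [hmin]
      have : (0:ℝ) ≤ |p₁ - 1/2| := abs_nonneg _
      linarith
  · constructor
    · rw [hmin]
      have : |p₂ - 1/2| ≤ 1/2 := by
        rw [abs_le]; constructor <;> [linarith [h₂.1]; linarith [h₂.2]]
      linarith
    · rw [hmin]
      have : (0:ℝ) ≤ |p₂ - 1/2| := abs_nonneg _
      linarith
  · rw [hmin, hmin]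
    linarith

/-- Given a symmetric, binomially-unimodal coefficient family `U`, the weighted binomial
sum is monotone in peakedness. -/
lemma layer_cmp (m : ℕ) (U : ℕ → ℝ)
    (hsymm : ∀ k, k ≤ m → U (m - k) = U k)
    (hmono : ∀ k, 2 * k + 1 ≤ m → U k ≤ U (k + 1))
    (p₁ p₂ : ℝ) (h₁ : p₁ ∈ Set.Icc (0:ℝ) 1) (h₂ : p₂ ∈ Set.Icc (0:ℝ) 1)
    (hd : |p₂ - 1/2| ≤ |p₁ - 1/2|) :
    ∑ k ∈ range (m + 1), (m.choose k : ℝ) * U k * (p₁ ^ k * (1 - p₁) ^ (m - k))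
      ≤ ∑ k ∈ range (m + 1), (m.choose k : ℝ) * U k * (p₂ ^ k * (1 - p₂) ^ (m - k)) := by
  set A := m / 2 with hA
  -- layer identity for U
  have hlayer : ∀ k, k ≤ m → U k = U 0
      + ∑ a ∈ Icc 1 A, (if a ≤ k ∧ k ≤ m - a then U a - U (a - 1) else 0) := by
    intro k hk
    set t := min k (m - k) with ht
    have htA : t ≤ A := by omega
    have hind : ∀ a, a ∈ Icc 1 A → ((a ≤ k ∧ k ≤ m - a) ↔ a ≤ t) := by
      intro a haa
      simp only [Finset.mem_Icc] at haa
      omega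
    have h1 : ∑ a ∈ Icc 1 A, (if a ≤ k ∧ k ≤ m - a then U a - U (a - 1) else 0)
        = ∑ a ∈ Icc 1 t, (U a - U (a - 1)) := by
      rw [← Finset.sum_filter]
      apply Finset.sum_congr
      · ext a
        simp only [Finset.mem_filter, Finset.mem_Icc]
        constructor
        · rintro ⟨h1, h2⟩; exact ⟨h1.1, by omega⟩
        · rintro ⟨h1, h2⟩
          refine ⟨⟨h1, by omega⟩, ?_⟩
          omega
      · intros; rfl
    rw [h1]
    -- telescoping
    have h2 : ∀ s : ℕ, s ≤ A → U 0 + ∑ a ∈ Icc 1 s, (U a - U (a - 1)) = U s := by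
      intro s
      induction s with
      | zero => simp
      | succ s ih =>
        intro hs
        have hicc : Icc 1 (s + 1) = insert (s + 1) (Icc 1 s) := by
          ext x; simp only [Finset.mem_Icc, Finset.mem_insert]; omega
        rw [hicc, Finset.sum_insert (by simp only [Finset.mem_Icc]; omega)]
        have := ih (by omega)
        have e : s + 1 - 1 = s := by omega
        rw [e]
        linarith
    rw [show U 0 + ∑ a ∈ Icc 1 t, (U a - U (a-1)) = U t from h2 t htA]
    rcases min_cases k (m - k) with ⟨h3, -⟩ | ⟨h3, -⟩
    · rw [← ht] at h3; rw [h3]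
    · rw [← ht] at h3; rw [h3]
      rw [← hsymm (m - k) (by omega)]
      congr 1
      omega
  -- expand both sums via the layer identity
  have expand : ∀ p : ℝ, p ∈ Set.Icc (0:ℝ) 1 →
      ∑ k ∈ range (m + 1), (m.choose k : ℝ) * U k * (p ^ k * (1 - p) ^ (m - k))
      = U 0 + ∑ a ∈ Icc 1 A, (U a - U (a - 1)) * Hc m a p := by
    intro p hp
    have e1 : ∀ k ∈ range (m + 1),
        (m.choose k : ℝ) * U k * (p ^ k * (1 - p) ^ (m - k))
        = (m.choose k : ℝ) * (p ^ k * (1 - p) ^ (m - k)) * U 0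
          + ∑ a ∈ Icc 1 A, (if a ≤ k ∧ k ≤ m - a
              then (U a - U (a - 1)) * ((m.choose k : ℝ) * (p ^ k * (1 - p) ^ (m - k))) else 0) := by
      intro k hk
      rw [Finset.mem_range] at hk
      rw [hlayer k (by omega)]
      have hpull : ∑ a ∈ Icc 1 A, (if a ≤ k ∧ k ≤ m - a
            then (U a - U (a - 1)) * ((m.choose k : ℝ) * (p ^ k * (1 - p) ^ (m - k))) else 0)
          = (∑ a ∈ Icc 1 A, (if a ≤ k ∧ k ≤ m - a then U a - U (a - 1) else 0))
            * ((m.choose k : ℝ) * (p ^ k * (1 - p) ^ (m - k))) := by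
        rw [Finset.sum_mul]
        apply Finset.sum_congr rfl
        intro a _
        rw [ite_mul, zero_mul]
      rw [hpull]
      ring
    rw [Finset.sum_congr rfl e1, Finset.sum_add_distrib]
    congr 1
    · -- binomial theorem : ∑ C p^k q^(m-k) * U 0 = U 0
      have hb : ∑ k ∈ range (m + 1), (m.choose k : ℝ) * (p ^ k * (1 - p) ^ (m - k)) = 1 := by
        have h := add_pow p (1 - p) m
        have e : p + (1 - p) = (1:ℝ) := by ring
        rw [e, one_pow] at h
        calc ∑ k ∈ range (m + 1), (m.choose k : ℝ) * (p ^ k * (1 - p) ^ (m - k))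
            = ∑ k ∈ range (m + 1), p ^ k * (1 - p) ^ (m - k) * (m.choose k : ℝ) := by
              apply Finset.sum_congr rfl; intro k _; ring
          _ = 1 := h.symm
      rw [← Finset.sum_mul, hb, one_mul]
    · -- swap sums
      rw [Finset.sum_comm]
      apply Finset.sum_congr rfl
      intro a ha
      have hfil : (range (m + 1)).filter (fun k => a ≤ k ∧ k ≤ m - a) = Icc a (m - a) := by
        ext k
        simp only [Finset.mem_filter, Finset.mem_range, Finset.mem_Icc]
        omega
      rw [← Finset.sum_filter, hfil, Hc_def, Finset.mul_sum]
  rw [expand p₁ h₁, expand p₂ h₂]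
  apply add_le_add_right
  apply Finset.sum_le_sum
  intro a ha
  simp only [Finset.mem_Icc] at ha
  have hnn : 0 ≤ U a - U (a - 1) := by
    have := hmono (a - 1) (by omega)
    have e : a - 1 + 1 = a := by omega
    rw [e] at this
    linarith
  exact mul_le_mul_of_nonneg_left (Hc_cmp m a ha.1 (by omega) p₁ p₂ h₁ h₂ hd) hnn



lemma ifac_coe (j : ℕ) : ifac (j : ℤ) = (j.factorial : ℤ) := by
  simp [ifac]

/-- Final comparison of the weighted survival sums. -/
lemma Gcmp (b : ℕ → ℕ) (hodd : ∀ n, 1 ≤ n → Odd (b n)) (m : ℕ)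
    (p₁ p₂ : ℝ) (h₁ : p₁ ∈ Set.Icc (0:ℝ) 1) (h₂ : p₂ ∈ Set.Icc (0:ℝ) 1)
    (hd : |p₂ - 1/2| ≤ |p₁ - 1/2|) :
    ∑ k ∈ range (m + 1),
        ((uCnt b m (k : ℤ) + uCnt b m ((m : ℤ) - (k : ℤ)) : ℕ) : ℝ)
          * (p₁ ^ k * (1 - p₁) ^ (m - k))
      ≤ ∑ k ∈ range (m + 1),
        ((uCnt b m (k : ℤ) + uCnt b m ((m : ℤ) - (k : ℤ)) : ℕ) : ℝ)
          * (p₂ ^ k * (1 - p₂) ^ (m - k)) := by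
  set U : ℕ → ℝ := fun k => ((Xw b m (k : ℤ) + Xw b m ((m : ℤ) - (k : ℤ)) : ℤ) : ℝ) with hU
  have hXfac : ∀ k : ℕ, k ≤ m →
      (Xw b m (k : ℤ) : ℝ) = (uCnt b m (k : ℤ) : ℝ) * (k.factorial : ℝ) * ((m - k).factorial : ℝ) := by
    intro k hk
    unfold Xw
    have e1 : ifac (k : ℤ) = (k.factorial : ℤ) := ifac_coe k
    have e2 : ((m : ℤ) - (k : ℤ)) = ((m - k : ℕ) : ℤ) := by push_cast; omega
    rw [e1, e2, ifac_coe]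
    push_cast
    ring
  have hXfac2 : ∀ k : ℕ, k ≤ m →
      (Xw b m ((m : ℤ) - (k : ℤ)) : ℝ)
        = (uCnt b m ((m : ℤ) - (k : ℤ)) : ℝ) * (k.factorial : ℝ) * ((m - k).factorial : ℝ) := by
    intro k hk
    unfold Xw
    have e2 : ((m : ℤ) - (k : ℤ)) = ((m - k : ℕ) : ℤ) := by push_cast; omega
    have e3 : ((m : ℤ) - ((m : ℤ) - (k : ℤ))) = (k : ℤ) := by ring
    rw [e3, e2, ifac_coe, ifac_coe]
    push_cast
    ring
  have hkey : ∀ k : ℕ, k ≤ m →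
      (m.factorial : ℝ) * (((uCnt b m (k : ℤ) + uCnt b m ((m : ℤ) - (k : ℤ)) : ℕ)) : ℝ)
        = (m.choose k : ℝ) * U k := by
    intro k hk
    rw [hU]
    simp only
    push_cast
    rw [hXfac k hk, hXfac2 k hk]
    have hc : (m.choose k : ℝ) * (k.factorial : ℝ) * ((m - k).factorial : ℝ) = (m.factorial : ℝ) := by
      exact_mod_cast congrArg (Nat.cast : ℕ → ℝ) (Nat.choose_mul_factorial_mul_factorial hk)
    nlinarith [hc]
  have hsymm : ∀ k, k ≤ m → U (m - k) = U k := by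
    intro k hk
    rw [hU]
    simp only
    have e1 : ((m - k : ℕ) : ℤ) = (m : ℤ) - (k : ℤ) := by push_cast; omega
    rw [e1]
    have e2 : ((m : ℤ) - ((m : ℤ) - (k : ℤ))) = (k : ℤ) := by ring
    rw [e2]
    push_cast
    ring
  have hmono : ∀ k, 2 * k + 1 ≤ m → U k ≤ U (k + 1) := by
    intro k hk
    rw [hU]
    simp only
    have h := XwP3 b hodd m (k : ℤ) (by push_cast; omega)
    have e1 : (((k + 1 : ℕ)) : ℤ) = (k : ℤ) + 1 := by push_cast; ring
    rw [e1]
    have e2 : ((m : ℤ) - ((k : ℤ) + 1)) = (m : ℤ) - 1 - (k : ℤ) := by ring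
    rw [e2]
    have hz : Xw b m (k : ℤ) + Xw b m ((m:ℤ) - (k:ℤ))
        ≤ Xw b m ((k:ℤ) + 1) + Xw b m ((m:ℤ) - 1 - (k:ℤ)) := by linarith
    exact_mod_cast hz
  have hpos : (0:ℝ) < (m.factorial : ℝ) := by positivity
  rw [← mul_le_mul_iff_right₀ hpos, Finset.mul_sum, Finset.mul_sum]
  calc ∑ k ∈ range (m + 1), (m.factorial : ℝ)
          * (((uCnt b m (k : ℤ) + uCnt b m ((m : ℤ) - (k : ℤ)) : ℕ) : ℝ)
            * (p₁ ^ k * (1 - p₁) ^ (m - k)))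
      = ∑ k ∈ range (m + 1), (m.choose k : ℝ) * U k * (p₁ ^ k * (1 - p₁) ^ (m - k)) := by
        apply Finset.sum_congr rfl
        intro k hk
        rw [Finset.mem_range] at hk
        linear_combination (p₁ ^ k * (1 - p₁) ^ (m - k)) * hkey k (by omega)
    _ ≤ ∑ k ∈ range (m + 1), (m.choose k : ℝ) * U k * (p₂ ^ k * (1 - p₂) ^ (m - k)) :=
        layer_cmp m U hsymm hmono p₁ p₂ h₁ h₂ hd
    _ = ∑ k ∈ range (m + 1), (m.factorial : ℝ)
          * (((uCnt b m (k : ℤ) + uCnt b m ((m : ℤ) - (k : ℤ)) : ℕ) : ℝ)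
            * (p₂ ^ k * (1 - p₂) ^ (m - k))) := by
        apply Finset.sum_congr rfl
        intro k hk
        rw [Finset.mem_range] at hk
        linear_combination (-(p₂ ^ k * (1 - p₂) ^ (m - k))) * hkey k (by omega)



/-! ### Sign-pattern combinatorics -/

section COMB
variable (b : ℕ → ℕ) (m : ℕ)

/-- Survival predicate for a sign pattern given by the up-set `S ⊆ range (m+1)`
(`0 ∈ S` encodes `X₀ = +1`). -/
def SurvR (S : Finset ℕ) : Prop :=
  ∀ n, 1 ≤ n → n ≤ m →
    |(if 0 ∈ S then (1:ℝ) else -1) + 2 * ∑ i ∈ range n, (if i + 1 ∈ S then (1:ℝ) else -1)|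
      < (b n : ℝ)

lemma step_sum_eval (S : Finset ℕ) (n : ℕ) :
    ∑ i ∈ range n, (if i + 1 ∈ S then (1:ℝ) else -1)
      = 2 * ((S ∩ Icc 1 n).card : ℝ) - n := by
  induction n with
  | zero => simp
  | succ n ih =>
    rw [Finset.sum_range_succ, ih]
    by_cases h : n + 1 ∈ S
    · have hins : S ∩ Icc 1 (n + 1) = insert (n + 1) (S ∩ Icc 1 n) := by
        ext x
        simp only [Finset.mem_inter, Finset.mem_Icc, Finset.mem_insert]
        constructor
        · rintro ⟨hx, h1, h2⟩
          rcases Nat.eq_or_lt_of_le h2 with h3 | h3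
          · exact Or.inl h3
          · exact Or.inr ⟨hx, h1, by omega⟩
        · rintro (rfl | ⟨hx, h1, h2⟩)
          · exact ⟨h, by omega, le_rfl⟩
          · exact ⟨hx, h1, by omega⟩
      have hnot : (n + 1) ∉ S ∩ Icc 1 n := by
        simp only [Finset.mem_inter, Finset.mem_Icc]
        omega
      rw [if_pos h, hins, Finset.card_insert_of_notMem hnot]
      push_cast
      ring
    · have hins : S ∩ Icc 1 (n + 1) = S ∩ Icc 1 n := by
        ext x
        simp only [Finset.mem_inter, Finset.mem_Icc]
        constructor
        · rintro ⟨hx, h1, h2⟩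
          refine ⟨hx, h1, ?_⟩
          rcases Nat.eq_or_lt_of_le h2 with h3 | h3
          · exact absurd (h3 ▸ hx) h
          · omega
        · rintro ⟨hx, h1, h2⟩
          exact ⟨hx, h1, by omega⟩
      rw [if_neg h, hins]
      push_cast
      ring

lemma abs_cast_iff (z : ℤ) (c : ℕ) : |(z : ℝ)| < (c : ℝ) ↔ |z| < (c : ℤ) := by
  rw [← Int.cast_abs]
  exact_mod_cast Iff.rfl

lemma survR_pos_iff (T : Finset ℕ) (hT : T ⊆ Icc 1 m) :
    SurvR b m (insert 0 T) ↔ SurvI b m T := by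
  rw [SurvI_def]
  unfold SurvR
  have h0 : (0 : ℕ) ∈ insert 0 T := Finset.mem_insert_self 0 T
  have hstep : ∀ i : ℕ, (i + 1 ∈ insert 0 T) ↔ (i + 1 ∈ T) := by
    intro i
    simp [Finset.mem_insert]
  have hint : ∀ n : ℕ, (insert 0 T) ∩ Icc 1 n = T ∩ Icc 1 n := by
    intro n
    apply Finset.insert_inter_of_notMem
    simp
  constructor
  · intro h n h1 h2
    have := h n h1 h2
    rw [if_pos h0, step_sum_eval, hint n] at this
    rw [← abs_cast_iff]
    push_cast
    convert this using 2
  · intro h n h1 h2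
    have := h n h1 h2
    rw [if_pos h0, step_sum_eval, hint n]
    rw [← abs_cast_iff] at this
    push_cast at this
    convert this using 2

lemma survR_neg_iff (T : Finset ℕ) (hT : T ⊆ Icc 1 m) (h0 : 0 ∉ T) :
    SurvR b m T ↔ SurvI b m (Icc 1 m \ T) := by
  rw [SurvI_def]
  unfold SurvR
  have hcard : ∀ n, 1 ≤ n → n ≤ m →
      (((Icc 1 m \ T) ∩ Icc 1 n).card : ℤ) = (n : ℤ) - ((T ∩ Icc 1 n).card : ℤ) := by
    intro n h1 h2
    have he : (Icc 1 m \ T) ∩ Icc 1 n = Icc 1 n \ (T ∩ Icc 1 n) := by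
      ext x
      simp only [Finset.mem_inter, Finset.mem_sdiff, Finset.mem_Icc]
      constructor
      · rintro ⟨⟨⟨hx1, hx2⟩, hx3⟩, hx4, hx5⟩
        exact ⟨⟨hx4, hx5⟩, fun hc => hx3 hc.1⟩
      · rintro ⟨⟨hx1, hx2⟩, hx3⟩
        refine ⟨⟨⟨hx1, by omega⟩, fun hc => hx3 ⟨hc, hx1, hx2⟩⟩, hx1, hx2⟩
    rw [he, Finset.card_sdiff_of_subset (Finset.inter_subset_right)]
    have hle : (T ∩ Icc 1 n).card ≤ n := by
      have := Finset.card_le_card (Finset.inter_subset_right (s₁ := T) (s₂ := Icc 1 n))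
      simpa [Nat.card_Icc] using this
    rw [Nat.card_Icc]
    push_cast
    omega
  constructor
  · intro h n h1 h2
    have := h n h1 h2
    rw [if_neg h0, step_sum_eval] at this
    rw [← abs_cast_iff]
    rw [hcard n h1 h2]
    push_cast
    have harg : (1 : ℝ) + 2 * (2 * ((n : ℝ) - ((T ∩ Icc 1 n).card : ℝ)) - n)
        = -((-1) + 2 * (2 * ((T ∩ Icc 1 n).card : ℝ) - n)) := by ring
    rw [harg, abs_neg]
    convert this using 2
  · intro h n h1 h2
    have := h n h1 h2
    rw [← abs_cast_iff] at this
    rw [hcard n h1 h2] at this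
    push_cast at this
    rw [if_neg h0, step_sum_eval]
    have harg : (1 : ℝ) + 2 * (2 * ((n : ℝ) - ((T ∩ Icc 1 n).card : ℝ)) - n)
        = -((-1) + 2 * (2 * ((T ∩ Icc 1 n).card : ℝ) - n)) := by ring
    rw [harg, abs_neg] at this
    convert this using 2

open Classical in
/-- The master combinatorial identity. -/
lemma comb_sum (p : ℝ) :
    ∑ S ∈ (range (m + 1)).powerset.filter (fun S => SurvR b m S),
        (2⁻¹ * (p ^ ((S.erase 0).card) * (1 - p) ^ (m - (S.erase 0).card)) : ℝ)
      = 2⁻¹ * ∑ k ∈ range (m + 1),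
          ((uCnt b m (k : ℤ) + uCnt b m ((m : ℤ) - (k : ℤ)) : ℕ) : ℝ)
            * (p ^ k * (1 - p) ^ (m - k)) := by
  classical
  have hrange : range (m + 1) = insert 0 (Icc 1 m) := by
    ext x; simp only [Finset.mem_range, Finset.mem_insert, Finset.mem_Icc]; omega
  have h0icc : (0 : ℕ) ∉ Icc 1 m := by simp
  have hcardIcc : ∀ T : Finset ℕ, T ⊆ Icc 1 m → T.card ≤ m := by
    intro T hT
    have := Finset.card_le_card hT
    simpa [Nat.card_Icc] using this
  conv_lhs => rw [hrange, Finset.powerset_insert]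
  rw [Finset.filter_union, Finset.sum_union]
  swap
  · apply Finset.disjoint_filter_filter
    rw [Finset.disjoint_left]
    intro S hS hS2
    rw [Finset.mem_powerset] at hS
    rw [Finset.mem_image] at hS2
    obtain ⟨T, hT, rfl⟩ := hS2
    exact h0icc (hS (Finset.mem_insert_self 0 T))
  -- generic fiberwise computation
  have fiber : ∀ (F : Finset (Finset ℕ)) (w : ℕ → ℝ), F ⊆ (Icc 1 m).powerset →
      ∑ T ∈ F, w T.card
        = ∑ k ∈ range (m + 1), ((F.filter (fun T => T.card = k)).card : ℝ) * w k := by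
    intro F w hF
    have hmap : ∀ T ∈ F, T.card ∈ range (m + 1) := by
      intro T hT
      have := hcardIcc T (Finset.mem_powerset.mp (hF hT))
      simp only [Finset.mem_range]
      omega
    rw [← Finset.sum_fiberwise_of_maps_to hmap]
    apply Finset.sum_congr rfl
    intro k _
    have hconst : ∀ T ∈ F.filter (fun T => T.card = k), w T.card = w k := by
      intro T hT
      simp only [Finset.mem_filter] at hT
      rw [hT.2]
    rw [Finset.sum_congr rfl hconst, Finset.sum_const, nsmul_eq_mul]
  -- identification of fiber counts
  have hcnt : ∀ k : ℕ,
      (((Icc 1 m).powerset.filter (fun T => SurvI b m T)).filter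
        (fun T => T.card = k)).card = uCnt b m (k : ℤ) := by
    intro k
    rw [uCnt_def]
    congr 1
    ext T
    simp only [Finset.mem_filter, Finset.mem_powerset]
    constructor
    · rintro ⟨⟨h1, h2⟩, h3⟩
      exact ⟨h1, h2, by exact_mod_cast h3⟩
    · rintro ⟨h1, h2, h3⟩
      exact ⟨⟨h1, h2⟩, by exact_mod_cast h3⟩
  -- part with 0 ∉ S  (start -1)
  have hneg : ∑ S ∈ (Icc 1 m).powerset.filter (fun S => SurvR b m S),
        (2⁻¹ * (p ^ ((S.erase 0).card) * (1 - p) ^ (m - (S.erase 0).card)) : ℝ)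
      = ∑ k ∈ range (m + 1),
          ((uCnt b m (k : ℤ) : ℕ) : ℝ) * (2⁻¹ * (p ^ (m - k) * (1 - p) ^ (m - (m - k)))) := by
    have step1 : ∑ S ∈ (Icc 1 m).powerset.filter (fun S => SurvR b m S),
          (2⁻¹ * (p ^ ((S.erase 0).card) * (1 - p) ^ (m - (S.erase 0).card)) : ℝ)
        = ∑ T ∈ (Icc 1 m).powerset.filter (fun T => SurvI b m T),
          (2⁻¹ * (p ^ (m - T.card) * (1 - p) ^ (m - (m - T.card))) : ℝ) := by
      apply Finset.sum_nbij' (i := fun S => Icc 1 m \ S) (j := fun T => Icc 1 m \ T)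
      · intro S hS
        simp only [Finset.mem_filter, Finset.mem_powerset] at hS ⊢
        obtain ⟨hS1, hS2⟩ := hS
        have h0 : 0 ∉ S := fun h => h0icc (hS1 h)
        exact ⟨Finset.sdiff_subset, (survR_neg_iff b m S hS1 h0).mp hS2⟩
      · intro T hT
        simp only [Finset.mem_filter, Finset.mem_powerset] at hT ⊢
        obtain ⟨hT1, hT2⟩ := hT
        have h0 : 0 ∉ Icc 1 m \ T := fun h => h0icc (Finset.sdiff_subset h)
        refine ⟨Finset.sdiff_subset, ?_⟩
        rw [survR_neg_iff b m _ Finset.sdiff_subset h0, Finset.sdiff_sdiff_eq_self hT1]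
        exact hT2
      · intro S hS
        simp only [Finset.mem_filter, Finset.mem_powerset] at hS
        exact Finset.sdiff_sdiff_eq_self hS.1
      · intro T hT
        simp only [Finset.mem_filter, Finset.mem_powerset] at hT
        exact Finset.sdiff_sdiff_eq_self hT.1
      · intro S hS
        simp only [Finset.mem_filter, Finset.mem_powerset] at hS
        have h0 : 0 ∉ S := fun h => h0icc (hS.1 h)
        have hcard : (Icc 1 m \ S).card = m - S.card := by
          rw [Finset.card_sdiff_of_subset hS.1, Nat.card_Icc]
          omega
        have hc2 : S.card ≤ m := hcardIcc S hS.1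
        rw [Finset.erase_eq_of_notMem h0, hcard]
        rw [show m - (m - S.card) = S.card by omega]
    rw [step1, fiber _ (fun k => (2⁻¹ * (p ^ (m - k) * (1 - p) ^ (m - (m - k))) : ℝ))
      (Finset.filter_subset _ _)]
    apply Finset.sum_congr rfl
    intro k _
    rw [hcnt k]
  -- part with 0 ∈ S (start +1)
  have hpos : ∑ S ∈ ((Icc 1 m).powerset.image (insert 0)).filter (fun S => SurvR b m S),
        (2⁻¹ * (p ^ ((S.erase 0).card) * (1 - p) ^ (m - (S.erase 0).card)) : ℝ)
      = ∑ k ∈ range (m + 1),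
          ((uCnt b m (k : ℤ) : ℕ) : ℝ) * (2⁻¹ * (p ^ k * (1 - p) ^ (m - k))) := by
    rw [Finset.filter_image]
    rw [Finset.sum_image (by
      intro T hT S hS hTS
      simp only [Finset.coe_filter, Set.mem_setOf_eq, Finset.mem_filter, Finset.mem_powerset] at hT hS
      have h1 : (0:ℕ) ∉ T := fun h => h0icc (hT.1 h)
      have h2 : (0:ℕ) ∉ S := fun h => h0icc (hS.1 h)
      rw [← Finset.erase_insert h1, ← Finset.erase_insert h2, hTS])]
    have step1 : ∀ T ∈ (Icc 1 m).powerset.filter (fun T => SurvR b m (insert 0 T)),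
        (2⁻¹ * (p ^ (((insert 0 T).erase 0).card) * (1 - p) ^ (m - ((insert 0 T).erase 0).card)) : ℝ)
          = 2⁻¹ * (p ^ T.card * (1 - p) ^ (m - T.card)) := by
      intro T hT
      simp only [Finset.mem_filter, Finset.mem_powerset] at hT
      have h1 : (0:ℕ) ∉ T := fun h => h0icc (hT.1 h)
      rw [Finset.erase_insert h1]
    rw [Finset.sum_congr rfl step1]
    have step2 : (Icc 1 m).powerset.filter (fun T => SurvR b m (insert 0 T))
        = (Icc 1 m).powerset.filter (fun T => SurvI b m T) := by
      apply Finset.filter_congr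
      intro T hT
      rw [Finset.mem_powerset] at hT
      constructor
      · intro h; exact (survR_pos_iff b m T hT).mp h
      · intro h; exact (survR_pos_iff b m T hT).mpr h
    rw [step2, fiber _ (fun k => (2⁻¹ * (p ^ k * (1 - p) ^ (m - k)) : ℝ))
      (Finset.filter_subset _ _)]
    apply Finset.sum_congr rfl
    intro k _
    rw [hcnt k]
  rw [hneg, hpos]
  -- reflect the negative-start sum
  have hrefl : ∑ k ∈ range (m + 1),
        ((uCnt b m (k : ℤ) : ℕ) : ℝ) * (2⁻¹ * (p ^ (m - k) * (1 - p) ^ (m - (m - k))))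
      = ∑ k ∈ range (m + 1),
        ((uCnt b m ((m : ℤ) - (k : ℤ)) : ℕ) : ℝ) * (2⁻¹ * (p ^ k * (1 - p) ^ (m - k))) := by
    rw [← Finset.sum_range_reflect]
    apply Finset.sum_congr rfl
    intro j hj
    rw [Finset.mem_range] at hj
    have e1 : m + 1 - 1 - j = m - j := by omega
    rw [e1]
    have e2 : m - (m - j) = j := by omega
    rw [e2]
    have e3 : ((m - j : ℕ) : ℤ) = (m : ℤ) - (j : ℤ) := by push_cast; omega
    rw [e3]
  rw [hrefl, ← Finset.sum_add_distrib, Finset.mul_sum]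
  apply Finset.sum_congr rfl
  intro k _
  push_cast
  ring


lemma survR_def (S : Finset ℕ) : SurvR b m S ↔
  ∀ n, 1 ≤ n → n ≤ m →
    |(if 0 ∈ S then (1:ℝ) else -1) + 2 * ∑ i ∈ range n, (if i + 1 ∈ S then (1:ℝ) else -1)|
      < (b n : ℝ) := Iff.rfl

end COMB

/-! ### Measure-theoretic reduction -/

section MEAS
variable {Ω : Type*} [MeasurableSpace Ω]

lemma stepDist_single_one (p : ℝ) : stepDist p {(1:ℝ)} = ENNReal.ofReal p := by
  unfold stepDist
  rw [Measure.add_apply, Measure.smul_apply, Measure.smul_apply,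
    Measure.dirac_apply' _ (measurableSet_singleton _),
    Measure.dirac_apply' _ (measurableSet_singleton _)]
  rw [Set.indicator_apply, Set.indicator_apply]
  norm_num

lemma stepDist_single_negone (p : ℝ) : stepDist p {(-1:ℝ)} = ENNReal.ofReal (1 - p) := by
  unfold stepDist
  rw [Measure.add_apply, Measure.smul_apply, Measure.smul_apply,
    Measure.dirac_apply' _ (measurableSet_singleton _),
    Measure.dirac_apply' _ (measurableSet_singleton _)]
  rw [Set.indicator_apply, Set.indicator_apply]
  norm_num

lemma stepDist_compl_pair (p : ℝ) : stepDist p ({(1:ℝ), (-1:ℝ)} : Set ℝ)ᶜ = 0 := by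
  have hms : MeasurableSet (({(1:ℝ), (-1:ℝ)} : Set ℝ)ᶜ) := by
    apply MeasurableSet.compl
    exact (measurableSet_singleton _).union (measurableSet_singleton _)
  unfold stepDist
  rw [Measure.add_apply, Measure.smul_apply, Measure.smul_apply,
    Measure.dirac_apply' _ hms, Measure.dirac_apply' _ hms]
  rw [Set.indicator_apply, Set.indicator_apply]
  have h1 : (1:ℝ) ∉ ({(1:ℝ), (-1:ℝ)} : Set ℝ)ᶜ := by simp
  have h2 : (-1:ℝ) ∉ ({(1:ℝ), (-1:ℝ)} : Set ℝ)ᶜ := by simp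
  rw [if_neg h1, if_neg h2]
  simp
/-- The sign value function of an up-set. -/
def eS (S : Finset ℕ) (i : ℕ) : ℝ := if i ∈ S then 1 else -1

/-- The real weight of a sign pattern. -/
noncomputable def wR (p : ℝ) (S : Finset ℕ) (i : ℕ) : ℝ :=
  if i = 0 then 1/2 else if i ∈ S then p else 1 - p

open Classical in
lemma measure_reduce (μ : Measure Ω) [IsProbabilityMeasure μ]
    (p : ℝ) (hp : p ∈ Set.Icc (0:ℝ) 1) (Y : ℕ → Ω → ℝ) (hmeas : ∀ i, Measurable (Y i))
    (hindep : iIndepFun Y μ)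
    (h0 : Measure.map (Y 0) μ = stepDist (1/2))
    (hd : ∀ i, Measure.map (Y (i+1)) μ = stepDist p)
    (b : ℕ → ℕ) (m : ℕ) :
    μ {ω | ∀ n, 1 ≤ n → n ≤ m → |Y 0 ω + 2 * ∑ i ∈ range n, Y (i+1) ω| < (b n : ℝ)}
    = ENNReal.ofReal (∑ S ∈ (range (m+1)).powerset.filter (fun S => SurvR b m S),
        (2⁻¹ * (p ^ ((S.erase 0).card) * (1 - p) ^ (m - (S.erase 0).card)) : ℝ)) := by
  classical
  set E := {ω | ∀ n, 1 ≤ n → n ≤ m → |Y 0 ω + 2 * ∑ i ∈ range n, Y (i+1) ω| < (b n : ℝ)}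
    with hE
  -- single-coordinate singleton measures
  have hsingle : ∀ i ∈ range (m + 1), ∀ S : Finset ℕ,
      μ (Y i ⁻¹' {eS S i}) = ENNReal.ofReal (wR p S i) := by
    intro i _ S
    have hpre : μ (Y i ⁻¹' {eS S i}) = (Measure.map (Y i) μ) {eS S i} := by
      rw [Measure.map_apply (hmeas i) (measurableSet_singleton _)]
    rw [hpre]
    rcases Nat.eq_zero_or_pos i with rfl | hi
    · rw [h0]
      unfold eS wR
      by_cases h : 0 ∈ S
      · rw [if_pos h, stepDist_single_one]
        norm_num
      · rw [if_neg h, stepDist_single_negone]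
        norm_num
    · obtain ⟨j, rfl⟩ : ∃ j, i = j + 1 := ⟨i - 1, by omega⟩
      rw [hd j]
      unfold eS wR
      by_cases h : j + 1 ∈ S
      · rw [if_pos h, stepDist_single_one, if_neg (by omega), if_pos h]
      · rw [if_neg h, stepDist_single_negone, if_neg (by omega), if_neg h]
  -- atoms
  set Atom : Finset ℕ → Set Ω := fun S => ⋂ i ∈ range (m + 1), Y i ⁻¹' {eS S i}
    with hAtom
  have hAtomMeas : ∀ S, MeasurableSet (Atom S) := by
    intro S
    apply MeasurableSet.biInter (Set.to_countable _)
    intro i _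
    exact (hmeas i) (measurableSet_singleton _)
  have hAtomVal : ∀ S : Finset ℕ,
      μ (Atom S) = ∏ i ∈ range (m + 1), ENNReal.ofReal (wR p S i) := by
    intro S
    rw [hAtom]
    simp only
    rw [(iIndepFun_iff_measure_inter_preimage_eq_mul.mp hindep) (range (m + 1))
      (fun i _ => measurableSet_singleton _)]
    exact Finset.prod_congr rfl (fun i hi => hsingle i hi S)
  -- weight evaluation
  have hWeight : ∀ S : Finset ℕ, S ⊆ range (m + 1) →
      ∏ i ∈ range (m + 1), ENNReal.ofReal (wR p S i)
        = ENNReal.ofReal (2⁻¹ * (p ^ ((S.erase 0).card) * (1 - p) ^ (m - (S.erase 0).card))) := by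
    intro S hS
    rw [← ENNReal.ofReal_prod_of_nonneg]
    swap
    · intro i _
      unfold wR
      split
      · norm_num
      · split
        · exact hp.1
        · have := hp.2; linarith
    congr 1
    have hrange : range (m + 1) = insert 0 (Icc 1 m) := by
      ext x; simp only [Finset.mem_range, Finset.mem_insert, Finset.mem_Icc]; omega
    have h0icc : (0:ℕ) ∉ Icc 1 m := by simp
    rw [hrange, Finset.prod_insert h0icc]
    unfold wR
    rw [if_pos rfl]
    have hcongr : ∀ i ∈ Icc 1 m,
        (if i = 0 then (1/2:ℝ) else if i ∈ S then p else 1 - p)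
          = (if i ∈ S then p else 1 - p) := by
      intro i hi
      simp only [Finset.mem_Icc] at hi
      rw [if_neg (by omega)]
    rw [Finset.prod_congr rfl hcongr, Finset.prod_ite, Finset.prod_const, Finset.prod_const]
    have hfil : (Icc 1 m).filter (fun i => i ∈ S) = S.erase 0 := by
      ext x
      simp only [Finset.mem_filter, Finset.mem_Icc, Finset.mem_erase]
      constructor
      · rintro ⟨⟨h1, h2⟩, h3⟩
        exact ⟨by omega, h3⟩
      · rintro ⟨h1, h2⟩
        have := hS h2
        simp only [Finset.mem_range] at this
        exact ⟨⟨by omega, by omega⟩, h2⟩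
    have hfil2 : ((Icc 1 m).filter (fun i => ¬ i ∈ S)).card = m - (S.erase 0).card := by
      have := Finset.card_filter_add_card_filter_not
        (s := Icc 1 m) (p := fun i => i ∈ S)
      rw [hfil] at this
      rw [Nat.card_Icc] at this
      omega
    rw [hfil, hfil2]
    ring
  -- the null set
  set NN : Set Ω := ⋃ i ∈ range (m + 1), (Y i ⁻¹' {(1:ℝ), (-1:ℝ)})ᶜ with hNN
  have hNNnull : μ NN = 0 := by
    rw [hNN]
    apply measure_biUnion_null_iff (Set.to_countable _) |>.mpr
    intro i _
    have : (Y i ⁻¹' {(1:ℝ), (-1:ℝ)})ᶜ = Y i ⁻¹' (({(1:ℝ), (-1:ℝ)} : Set ℝ)ᶜ) := by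
      rw [Set.preimage_compl]
    rw [this, ← Measure.map_apply (hmeas i) (by
      apply MeasurableSet.compl
      exact (measurableSet_singleton _).union (measurableSet_singleton _))]
    rcases Nat.eq_zero_or_pos i with rfl | hi
    · rw [h0, stepDist_compl_pair]
    · obtain ⟨j, rfl⟩ : ∃ j, i = j + 1 := ⟨i - 1, by omega⟩
      rw [hd j, stepDist_compl_pair]
  -- E agrees with union of surviving atoms away from NN
  set U : Set Ω := ⋃ S ∈ (range (m+1)).powerset.filter (fun S => SurvR b m S), Atom S
    with hU
  have hmemAtom : ∀ (S : Finset ℕ) (ω : Ω), ω ∈ Atom S ↔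
      ∀ i ∈ range (m+1), Y i ω = eS S i := by
    intro S ω
    rw [hAtom]
    simp only [Set.mem_iInter, Set.mem_preimage, Set.mem_singleton_iff]
  have hmemNN : ∀ ω : Ω, ω ∉ NN ↔ ∀ i ∈ range (m+1), Y i ω = 1 ∨ Y i ω = -1 := by
    intro ω
    rw [hNN]
    simp only [Set.mem_iUnion, Set.mem_compl_iff, Set.mem_preimage, Set.mem_insert_iff,
      Set.mem_singleton_iff, not_exists, not_not]
  have hEU : E ∩ NNᶜ = U ∩ NNᶜ := by
    ext ω
    simp only [Set.mem_inter_iff, Set.mem_compl_iff]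
    constructor
    · rintro ⟨hEω, hNω⟩
      refine ⟨?_, hNω⟩
      have hval := (hmemNN ω).mp hNω
      set S : Finset ℕ := (range (m+1)).filter (fun i => Y i ω = 1) with hSdef
      have hSval : ∀ i ∈ range (m+1), eS S i = Y i ω := by
        intro i hi
        unfold eS
        by_cases h : Y i ω = 1
        · have hmem : i ∈ S := by rw [hSdef]; exact Finset.mem_filter.mpr ⟨hi, h⟩
          rw [if_pos hmem, h]
        · have hmem : i ∉ S := by
            rw [hSdef]; intro hc; exact h (Finset.mem_filter.mp hc).2
          rw [if_neg hmem]
          rcases hval i hi with h1 | h1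
          · exact absurd h1 h
          · rw [h1]
      rw [hU]
      rw [Set.mem_iUnion₂]
      refine ⟨S, ?_, ?_⟩
      · rw [Finset.mem_filter]
        constructor
        · rw [Finset.mem_powerset, hSdef]
          exact Finset.filter_subset _ _
        · rw [survR_def]
          intro n h1 h2
          have hmain := (hE ▸ hEω) n h1 h2
          have e0 : (if 0 ∈ S then (1:ℝ) else -1) = Y 0 ω := by
            have := hSval 0 (by simp only [Finset.mem_range]; omega)
            unfold eS at this
            exact this
          have esum : ∑ i ∈ range n, (if i + 1 ∈ S then (1:ℝ) else -1)
              = ∑ i ∈ range n, Y (i+1) ω := by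
            apply Finset.sum_congr rfl
            intro i hi
            rw [Finset.mem_range] at hi
            have := hSval (i+1) (by simp only [Finset.mem_range]; omega)
            unfold eS at this
            exact this
          rw [e0, esum]
          exact hmain
      · rw [hmemAtom]
        intro i hi
        exact (hSval i hi).symm
    · rintro ⟨hUω, hNω⟩
      refine ⟨?_, hNω⟩
      rw [hU, Set.mem_iUnion₂] at hUω
      obtain ⟨S, hSmem, hωS⟩ := hUω
      rw [Finset.mem_filter] at hSmem
      obtain ⟨-, hSsurv⟩ := hSmem
      rw [hmemAtom] at hωS
      rw [hE]
      intro n h1 h2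
      rw [survR_def] at hSsurv
      have hmain := hSsurv n h1 h2
      have e0 : Y 0 ω = (if 0 ∈ S then (1:ℝ) else -1) :=
        hωS 0 (by simp only [Finset.mem_range]; omega)
      have esum : ∑ i ∈ range n, Y (i+1) ω
          = ∑ i ∈ range n, (if i + 1 ∈ S then (1:ℝ) else -1) := by
        apply Finset.sum_congr rfl
        intro i hi
        rw [Finset.mem_range] at hi
        exact hωS (i+1) (by simp only [Finset.mem_range]; omega)
      rw [e0, esum]
      exact hmain
  -- measures agree modulo the null set
  have hmod : ∀ A : Set Ω, μ A = μ (A ∩ NNᶜ) := by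
    intro A
    apply le_antisymm
    · calc μ A ≤ μ ((A ∩ NNᶜ) ∪ NN) := by
            apply measure_mono
            intro x hx
            by_cases h : x ∈ NN
            · exact Or.inr h
            · exact Or.inl ⟨hx, h⟩
        _ ≤ μ (A ∩ NNᶜ) + μ NN := measure_union_le _ _
        _ = μ (A ∩ NNᶜ) := by rw [hNNnull, add_zero]
    · exact measure_mono Set.inter_subset_left
  have hEeqU : μ E = μ U := by
    rw [hmod E, hmod U, hEU]
  rw [hEeqU, hU]
  -- disjointness and summation
  have hdisj : (↑((range (m+1)).powerset.filter (fun S => SurvR b m S))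
      : Set (Finset ℕ)).PairwiseDisjoint Atom := by
    intro S hS S' hS' hne
    simp only [Finset.coe_filter, Set.mem_setOf_eq, Finset.mem_powerset] at hS hS'
    have hdiff : ∃ i, i ∈ range (m+1) ∧ eS S i ≠ eS S' i := by
      by_contra hcon
      push_neg at hcon
      apply hne
      apply Finset.ext
      intro i
      by_cases hi : i ∈ range (m+1)
      · have := hcon i hi
        unfold eS at this
        constructor
        · intro h
          by_contra h2
          rw [if_pos h, if_neg h2] at this
          norm_num at this
        · intro h
          by_contra h2
          rw [if_neg h2, if_pos h] at this
          norm_num at this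
      · constructor
        · intro h; exact absurd (hS.1 h) hi
        · intro h; exact absurd (hS'.1 h) hi
    obtain ⟨i, hi, hne2⟩ := hdiff
    apply Set.disjoint_left.mpr
    intro ω hω hω'
    rw [hmemAtom] at hω hω'
    exact hne2 ((hω i hi).symm.trans (hω' i hi))
  rw [measure_biUnion_finset hdisj (fun S _ => hAtomMeas S)]
  rw [ENNReal.ofReal_sum_of_nonneg]
  swap
  · intro S _
    have h1 := hp.1
    have h2 := hp.2
    have : (0:ℝ) ≤ 1 - p := by linarith
    positivity
  apply Finset.sum_congr rfl
  intro S hS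
  rw [Finset.mem_filter, Finset.mem_powerset] at hS
  rw [hAtomVal S, hWeight S hS.1]


end MEAS

/-- **Corollary 3.** Consider the walk `V^p_n = X_0 + 2 S^p_n` with random initial state
`X_0 = ±1` with equal probabilities, independent of the increments (modelled by `Y 0 = X_0`
with `Y 0 ~ stepDist (1/2)`, increments `Y (i+1) ~ stepDist p`, all independent, and
`V^p_n = Y 0 + 2 ∑_{1 ≤ i ≤ n} Y i`).  For odd integer boundaries `b_n ≥ 1`, the stopping
time `T̃^p = inf{n ≥ 1 : |V^p_n| ≥ b_n}` is stochastically increasing in `p ∈ [0,1/2]` and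
decreasing in `p ∈ [1/2,1]`: if `|p' - 1/2| > |p'' - 1/2|`, then
`P(T̃^{p'} > m) ≤ P(T̃^{p''} > m)` for every `m ≥ 1`. -/
theorem doubled_walk_stopping_time_stochastically_monotone
    {Ω' Ω'' : Type*} [MeasurableSpace Ω'] [MeasurableSpace Ω'']
    (μ' : Measure Ω') (μ'' : Measure Ω'')
    [IsProbabilityMeasure μ'] [IsProbabilityMeasure μ'']
    (p' p'' : ℝ) (hp' : p' ∈ Set.Icc (0 : ℝ) 1) (hp'' : p'' ∈ Set.Icc (0 : ℝ) 1)
    (hpp : |p' - 1/2| > |p'' - 1/2|)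
    (Y' : ℕ → Ω' → ℝ) (Y'' : ℕ → Ω'' → ℝ)
    (hY'meas : ∀ i, Measurable (Y' i)) (hY''meas : ∀ i, Measurable (Y'' i))
    (hY'indep : iIndepFun Y' μ')
    (hY''indep : iIndepFun Y'' μ'')
    (hY'0dist : Measure.map (Y' 0) μ' = stepDist (1/2))
    (hY''0dist : Measure.map (Y'' 0) μ'' = stepDist (1/2))
    (hY'dist : ∀ i, Measure.map (Y' (i + 1)) μ' = stepDist p')
    (hY''dist : ∀ i, Measure.map (Y'' (i + 1)) μ'' = stepDist p'')
    (b : ℕ → ℕ) (hodd : ∀ n, 1 ≤ n → Odd (b n)) (hpos : ∀ n, 1 ≤ n → 1 ≤ b n)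
    (m : ℕ) (hm : 1 ≤ m) :
    μ' {ω | ∀ n, 1 ≤ n → n ≤ m →
        |Y' 0 ω + 2 * ∑ i ∈ Finset.range n, Y' (i + 1) ω| < (b n : ℝ)}
      ≤ μ'' {ω | ∀ n, 1 ≤ n → n ≤ m →
        |Y'' 0 ω + 2 * ∑ i ∈ Finset.range n, Y'' (i + 1) ω| < (b n : ℝ)} := by
  have h1 := measure_reduce μ' p' hp' Y' hY'meas hY'indep hY'0dist hY'dist b m
  have h2 := measure_reduce μ'' p'' hp'' Y'' hY''meas hY''indep hY''0dist hY''dist b m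
  rw [comb_sum b m p'] at h1
  rw [comb_sum b m p''] at h2
  rw [h1, h2]
  apply ENNReal.ofReal_le_ofReal
  apply mul_le_mul_of_nonneg_left _ (by norm_num : (0:ℝ) ≤ 2⁻¹)
  exact Gcmp b hodd m p' p'' hp' hp'' (le_of_lt hpp)
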